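/- The digraphs W_4 and C_4* correspond to sign-equivalent negative-diagonal sign patterns: there exist negative-diagonal sign-nonsingular 4×4 patterns H_1 with digraph W_4 and H_2 with digraph C_4* such that H_2 can be obtained from H_1 by negating some rows and columns and permuting rows and columns. -/

import Mathlib

open Matrix

/-- `c` traces a directed cycle of length `m+1` in the digraph `R`:
distinct vertices, consecutive arcs (indices wrap around in `Fin (m+1)`). -/
def DicycleOn {V : Type*} {m : ℕ} (R : V → V → Prop) (c : Fin (m+1) → V) : Prop :=
  Function.Injective c ∧ ∀ i, R (c i) (c (i+1))

/-- A digraph is noneven if some 0,1-weighting (valued in `ZMod 2`) of its arcs makes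
every directed cycle have odd total weight. -/
def IsNoneven {V : Type*} (R : V → V → Prop) : Prop :=
  ∃ w : V → V → ZMod 2, ∀ (m : ℕ) (c : Fin (m+1) → V),
    DicycleOn R c → ∑ i, w (c i) (c (i+1)) = 1

/-- A digraph is even if every 0,1-weighting of its arcs admits a directed cycle
of even total weight. -/
def IsEvenDigraph {V : Type*} (R : V → V → Prop) : Prop :=
  ∀ w : V → V → ZMod 2, ∃ (m : ℕ) (c : Fin (m+1) → V),
    DicycleOn R c ∧ ∑ i, w (c i) (c (i+1)) = 0

def StronglyConnected {V : Type*} (R : V → V → Prop) : Prop :=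
  ∀ u v, Relation.ReflTransGen R u v

/-- Removing any single vertex leaves a strongly connected digraph. -/
def StronglyTwoConnected {V : Type*} (R : V → V → Prop) : Prop :=
  ∀ x : V, StronglyConnected (fun a b : {y : V // y ≠ x} => R a b)

def SemiComplete {V : Type*} (R : V → V → Prop) : Prop :=
  ∀ u v : V, u ≠ v → R u v ∨ R v u

/-- The digraph W₄: double arcs 0↔1 and 2↔3, single arcs 0→2, 2→1, 1→3, 3→0
(the unique 2-connected semi-complete noneven digraph on 4 vertices; every vertex
has indegree 2 and outdegree 2 and there are 8 arcs). -/
def W4 : Fin 4 → Fin 4 → Prop := fun u v =>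
  (u = 0 ∧ v = 1) ∨ (u = 1 ∧ v = 0) ∨ (u = 2 ∧ v = 3) ∨ (u = 3 ∧ v = 2) ∨
  (u = 0 ∧ v = 2) ∨ (u = 2 ∧ v = 1) ∨ (u = 1 ∧ v = 3) ∨ (u = 3 ∧ v = 0)

/-- The symmetric double 4-cycle C₄*. -/
def C4star : Fin 4 → Fin 4 → Prop := fun u v => v = u + 1 ∨ u = v + 1

def DigraphIso {V W : Type*} (R : V → V → Prop) (S : W → W → Prop) : Prop :=
  ∃ e : V ≃ W, ∀ u v, R u v ↔ S (e u) (e v)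

/-- A sign pattern: entries in {-1, 0, 1}. -/
def IsSignPattern {I : Type*} (H : Matrix I I ℝ) : Prop :=
  ∀ i j, H i j = -1 ∨ H i j = 0 ∨ H i j = 1

/-- `A ∈ Q(H)`: the matrix `A` has sign pattern `H`. -/
def HasSignPattern {I : Type*} (A H : Matrix I I ℝ) : Prop :=
  ∀ i j, Real.sign (A i j) = H i j

/-- `Q(H)` contains a symplectic pair `(A, D)` with `Aᵀ D = I`. -/
def AllowsSymplecticPairs {I : Type*} [Fintype I] [DecidableEq I] (H : Matrix I I ℝ) : Prop :=
  ∃ A D : Matrix I I ℝ, HasSignPattern A H ∧ HasSignPattern D H ∧ Aᵀ * D = 1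

def IsSignNonsingular {I : Type*} [Fintype I] [DecidableEq I] (H : Matrix I I ℝ) : Prop :=
  ∀ A : Matrix I I ℝ, HasSignPattern A H → A.det ≠ 0

def NegativeDiagonal {I : Type*} (H : Matrix I I ℝ) : Prop := ∀ i, H i i = -1

/-- The (unweighted) digraph of the pattern `H` is `R`: an arc `(i,j)`, `i ≠ j`,
exactly for the off-diagonal nonzero entries. -/
def PatternDigraph {I : Type*} (H : Matrix I I ℝ) (R : I → I → Prop) : Prop :=
  ∀ i j, i ≠ j → (H i j ≠ 0 ↔ R i j)

/-- An unweighted digraph allows symplectic pairs if some negative-diagonal sign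
pattern whose digraph is `R` allows symplectic pairs. -/
def DigraphAllowsSymplecticPairs {V : Type*} [Fintype V] [DecidableEq V]
    (R : V → V → Prop) : Prop :=
  ∃ H : Matrix V V ℝ, IsSignPattern H ∧ NegativeDiagonal H ∧
    PatternDigraph H R ∧ AllowsSymplecticPairs H

/-- Tree edges of the caterpillar tree underlying an extended caterpillar:
consecutive backbone vertices, and blossom vertices joined to their backbone vertex.
`pos` is the blossom (backbone) index of a vertex, `bb j` the backbone vertex of index `j`. -/
def CaterpillarTreeEdge {n : ℕ} (pos : Fin n → ℕ) (bb : ℕ → Fin n) (u v : Fin n) : Prop :=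
  u ≠ v ∧ ((u = bb (pos u) ∧ v = bb (pos v) ∧ (pos v = pos u + 1 ∨ pos u = pos v + 1)) ∨
           (pos u = pos v ∧ (u = bb (pos u) ∨ v = bb (pos v))))

/-- `R` is an extended caterpillar on `Fin n`, where the natural order of `Fin n`
is the backbone-induced total order: there are `k` blossoms (`pos` monotone, surjective
onto `{0, …, k-1}` with backbone vertices `bb j`); the first and last blossoms are
trivial (no blossom vertices at the ends of the backbone); and the arcs are: one arc
`u → v` for every pair `v < u`, together with both arcs of every tree edge. -/
def IsExtendedCaterpillar {n : ℕ} (R : Fin n → Fin n → Prop) : Prop :=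
  ∃ (k : ℕ) (pos : Fin n → ℕ) (bb : ℕ → Fin n),
    0 < k ∧ Monotone pos ∧ (∀ v, pos v < k) ∧ (∀ j, j < k → pos (bb j) = j) ∧
    (∀ v, pos v = 0 → v = bb 0) ∧ (∀ v, pos v = k - 1 → v = bb (k - 1)) ∧
    (∀ u v, R u v ↔ (v < u ∨ (u < v ∧ CaterpillarTreeEdge pos bb u v)))

/-- Digraphs obtainable from the symmetric double cycle `C_k*` by subdividing arcs
and splitting vertices (the weak k-double-cycles). -/
inductive WeakDoubleCycle : (k : ℕ) → (V : Type) → (V → V → Prop) → Prop where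
  | base (m : ℕ) : WeakDoubleCycle (m+1) (Fin (m+1)) (fun u v => v = u + 1 ∨ u = v + 1)
  | subdivide {k : ℕ} {V : Type} {R : V → V → Prop} (a b : V) (hab : R a b)
      (h : WeakDoubleCycle k V R) :
      WeakDoubleCycle k (Option V) (fun x y =>
        (x = some a ∧ y = none) ∨ (x = none ∧ y = some b) ∨
        (∃ u v, x = some u ∧ y = some v ∧ R u v ∧ ¬(u = a ∧ v = b)))
  | split {k : ℕ} {V : Type} {R : V → V → Prop} (a : V) (h : WeakDoubleCycle k V R) :
      WeakDoubleCycle k (Option V) (fun x y =>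
        (x = some a ∧ y = none) ∨
        (∃ v, x = none ∧ y = some v ∧ R a v) ∨
        (∃ u v, x = some u ∧ y = some v ∧ R u v ∧ u ≠ a))

/-- C₄-cockades: start with the 4-cycle; repeatedly pick an edge `(u,v)`, add two new
vertices `u', v'` and the edges `(u,u')`, `(u',v')`, `(v',v)`. -/
inductive IsC4Cockade : (V : Type) → SimpleGraph V → Prop where
  | base : IsC4Cockade (Fin 4) (SimpleGraph.fromRel (fun u v => v = u + 1))
  | attach {V : Type} {G : SimpleGraph V} (u v : V) (huv : G.Adj u v)
      (h : IsC4Cockade V G) :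
      IsC4Cockade (V ⊕ Fin 2)
        (SimpleGraph.fromRel (fun x y =>
          (∃ a b, x = Sum.inl a ∧ y = Sum.inl b ∧ G.Adj a b) ∨
          (x = Sum.inl u ∧ y = Sum.inr 0) ∨ (x = Sum.inr 0 ∧ y = Sum.inr 1) ∨
          (x = Sum.inr 1 ∧ y = Sum.inl v)))

/-- `G` is 2-connected: connected, and removing any single vertex leaves it connected. -/
def GraphTwoConnected {V : Type*} (G : SimpleGraph V) : Prop :=
  G.Connected ∧ ∀ v : V, (G.induce {u | u ≠ v}).Connected


private lemma det_four {R : Type*} [CommRing R] (A : Matrix (Fin 4) (Fin 4) R) :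
    A.det = A 0 0 * A 1 1 * A 2 2 * A 3 3 - A 0 0 * A 1 1 * A 2 3 * A 3 2 - A 0 0 * A 1 2 * A 2 1 * A 3 3 + A 0 0 * A 1 2 * A 2 3 * A 3 1 + A 0 0 * A 1 3 * A 2 1 * A 3 2 - A 0 0 * A 1 3 * A 2 2 * A 3 1 - A 0 1 * A 1 0 * A 2 2 * A 3 3 + A 0 1 * A 1 0 * A 2 3 * A 3 2 + A 0 1 * A 1 2 * A 2 0 * A 3 3 - A 0 1 * A 1 2 * A 2 3 * A 3 0 - A 0 1 * A 1 3 * A 2 0 * A 3 2 + A 0 1 * A 1 3 * A 2 2 * A 3 0 + A 0 2 * A 1 0 * A 2 1 * A 3 3 - A 0 2 * A 1 0 * A 2 3 * A 3 1 - A 0 2 * A 1 1 * A 2 0 * A 3 3 + A 0 2 * A 1 1 * A 2 3 * A 3 0 + A 0 2 * A 1 3 * A 2 0 * A 3 1 - A 0 2 * A 1 3 * A 2 1 * A 3 0 - A 0 3 * A 1 0 * A 2 1 * A 3 2 + A 0 3 * A 1 0 * A 2 2 * A 3 1 + A 0 3 * A 1 1 * A 2 0 * A 3 2 - A 0 3 *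 A 1 1 * A 2 2 * A 3 0 - A 0 3 * A 1 2 * A 2 0 * A 3 1 + A 0 3 * A 1 2 * A 2 1 * A 3 0 := by
  rw [Matrix.det_succ_row_zero, Fin.sum_univ_four]
  norm_num [Matrix.det_fin_three, Matrix.submatrix_apply, Fin.succAbove, Fin.lt_def,
    show (Fin.succ 2 : Fin 4) = 3 from rfl, show ((2:Fin 3).castSucc : Fin 4) = 2 from rfl,
    show (Fin.succ 0 : Fin 4) = 1 from rfl, show (Fin.succ 1 : Fin 4) = 2 from rfl,
    show ((3 : Fin 4) : ℕ) = 3 from rfl]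
  ring

private lemma aux_pos {x : ℝ} (h : Real.sign x = 1) : 0 < x := by
  rcases lt_trichotomy x 0 with h' | h' | h'
  · rw [Real.sign_of_neg h'] at h; norm_num at h
  · rw [h', Real.sign_zero] at h; norm_num at h
  · exact h'

private lemma aux_neg {x : ℝ} (h : Real.sign x = -1) : x < 0 := by
  rcases lt_trichotomy x 0 with h' | h' | h'
  · exact h'
  · rw [h', Real.sign_zero] at h; norm_num at h
  · rw [Real.sign_of_pos h'] at h; norm_num at h

private lemma sns1 : IsSignNonsingular (!![-1,1,1,0; -1,-1,0,1; 0,1,-1,1; -1,0,-1,-1] : Matrix (Fin 4) (Fin 4) ℝ) := by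
  intro A hA
  have h00 : A 0 0 < 0 := aux_neg (by have t := hA 0 0; norm_num at t; exact t)
  have h01 : 0 < A 0 1 := aux_pos (by have t := hA 0 1; norm_num at t; exact t)
  have h02 : 0 < A 0 2 := aux_pos (by have t := hA 0 2; norm_num at t; exact t)
  have z03 : A 0 3 = 0 := by have t := hA 0 3; simp [Real.sign_eq_zero_iff] at t; exact t
  have h10 : A 1 0 < 0 := aux_neg (by have t := hA 1 0; norm_num at t; exact t)
  have h11 : A 1 1 < 0 := aux_neg (by have t := hA 1 1; norm_num at t; exact t)
  have z12 : A 1 2 = 0 := by have t := hA 1 2; simp [Real.sign_eq_zero_iff] at t; exact t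
  have h13 : 0 < A 1 3 := aux_pos (by have t := hA 1 3; norm_num at t; exact t)
  have z20 : A 2 0 = 0 := by have t := hA 2 0; simp [Real.sign_eq_zero_iff] at t; exact t
  have h21 : 0 < A 2 1 := aux_pos (by have t := hA 2 1; norm_num at t; exact t)
  have h22 : A 2 2 < 0 := aux_neg (by have t := hA 2 2; norm_num at t; exact t)
  have h23 : 0 < A 2 3 := aux_pos (by have t := hA 2 3; norm_num at t; exact t)
  have h30 : A 3 0 < 0 := aux_neg (by have t := hA 3 0; norm_num at t; exact t)
  have z31 : A 3 1 = 0 := by have t := hA 3 1; simp [Real.sign_eq_zero_iff] at t; exact t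
  have h32 : A 3 2 < 0 := aux_neg (by have t := hA 3 2; norm_num at t; exact t)
  have h33 : A 3 3 < 0 := aux_neg (by have t := hA 3 3; norm_num at t; exact t)
  have hd : 0 < A.det := by
    rw [det_four A, z03, z12, z20, z31]
    nlinarith [(mul_pos (mul_pos (mul_pos (neg_pos.mpr h00) (neg_pos.mpr h11)) (neg_pos.mpr h22)) (neg_pos.mpr h33)), (mul_pos (mul_pos (mul_pos (neg_pos.mpr h00) (neg_pos.mpr h11)) h23) (neg_pos.mpr h32)), (mul_pos (mul_pos (mul_pos (neg_pos.mpr h00) h13) h21) (neg_pos.mpr h32)), (mul_pos (mul_pos (mul_pos h01 (neg_pos.mpr h10)) (neg_pos.mpr h22)) (neg_pos.mpr h33)), (mul_pos (mul_pos (mul_pos h01 (neg_pos.mpr h10)) h23) (neg_pos.mpr h32)), (mul_pos (mul_pos (mul_pos h01 h13) (neg_pos.mpr h22)) (neg_pos.mpr h30)), (mul_pos (mul_pos (mul_pos h02 (neg_pos.mpr h10)) h21) (neg_pos.mpr h33)), (mul_pos (mul_pos (mul_pos h02 (neg_pos.mpr h11)) h23) (neg_pos.mpr h30)), (mul_pos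 (mul_pos (mul_pos h02 h13) h21) (neg_pos.mpr h30))]
  exact hd.ne'

private lemma sns2 : IsSignNonsingular (!![-1,1,0,1; -1,-1,1,0; 0,-1,-1,1; -1,0,-1,-1] : Matrix (Fin 4) (Fin 4) ℝ) := by
  intro A hA
  have h00 : A 0 0 < 0 := aux_neg (by have t := hA 0 0; norm_num at t; exact t)
  have h01 : 0 < A 0 1 := aux_pos (by have t := hA 0 1; norm_num at t; exact t)
  have z02 : A 0 2 = 0 := by have t := hA 0 2; simp [Real.sign_eq_zero_iff] at t; exact t
  have h03 : 0 < A 0 3 := aux_pos (by have t := hA 0 3; norm_num at t; exact t)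
  have h10 : A 1 0 < 0 := aux_neg (by have t := hA 1 0; norm_num at t; exact t)
  have h11 : A 1 1 < 0 := aux_neg (by have t := hA 1 1; norm_num at t; exact t)
  have h12 : 0 < A 1 2 := aux_pos (by have t := hA 1 2; norm_num at t; exact t)
  have z13 : A 1 3 = 0 := by have t := hA 1 3; simp [Real.sign_eq_zero_iff] at t; exact t
  have z20 : A 2 0 = 0 := by have t := hA 2 0; simp [Real.sign_eq_zero_iff] at t; exact t
  have h21 : A 2 1 < 0 := aux_neg (by have t := hA 2 1; norm_num at t; exact t)
  have h22 : A 2 2 < 0 := aux_neg (by have t := hA 2 2; norm_num at t; exact t)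
  have h23 : 0 < A 2 3 := aux_pos (by have t := hA 2 3; norm_num at t; exact t)
  have h30 : A 3 0 < 0 := aux_neg (by have t := hA 3 0; norm_num at t; exact t)
  have z31 : A 3 1 = 0 := by have t := hA 3 1; simp [Real.sign_eq_zero_iff] at t; exact t
  have h32 : A 3 2 < 0 := aux_neg (by have t := hA 3 2; norm_num at t; exact t)
  have h33 : A 3 3 < 0 := aux_neg (by have t := hA 3 3; norm_num at t; exact t)
  have hd : 0 < A.det := by
    rw [det_four A, z02, z13, z20, z31]
    nlinarith [(mul_pos (mul_pos (mul_pos (neg_pos.mpr h00) (neg_pos.mpr h11)) (neg_pos.mpr h22)) (neg_pos.mpr h33)), (mul_pos (mul_pos (mul_pos (neg_pos.mpr h00) (neg_pos.mpr h11)) h23) (neg_pos.mpr h32)), (mul_pos (mul_pos (mul_pos (neg_pos.mpr h00) h12) (neg_pos.mpr h21)) (neg_pos.mpr h33)), (mul_pos (mul_pos (mul_pos h01 (neg_pos.mpr h10)) (neg_pos.mpr h22)) (neg_pos.mpr h33)), (mul_pos (mul_pos (mul_pos h01 (neg_pos.mpr h10)) h23) (neg_pos.mpr h32)), (mul_pos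 (mul_pos (mul_pos h01 h12) h23) (neg_pos.mpr h30)), (mul_pos (mul_pos (mul_pos h03 (neg_pos.mpr h10)) (neg_pos.mpr h21)) (neg_pos.mpr h32)), (mul_pos (mul_pos (mul_pos h03 (neg_pos.mpr h11)) (neg_pos.mpr h22)) (neg_pos.mpr h30)), (mul_pos (mul_pos (mul_pos h03 h12) (neg_pos.mpr h21)) (neg_pos.mpr h30))]
  exact hd.ne'

/-- W₄ and C₄* correspond to sign-equivalent negative-diagonal
sign-nonsingular patterns. -/
theorem stmt12 : ∃ H₁ H₂ : Matrix (Fin 4) (Fin 4) ℝ,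
    IsSignPattern H₁ ∧ IsSignPattern H₂ ∧ NegativeDiagonal H₁ ∧ NegativeDiagonal H₂ ∧
    IsSignNonsingular H₁ ∧ IsSignNonsingular H₂ ∧
    PatternDigraph H₁ W4 ∧ PatternDigraph H₂ C4star ∧
    ∃ (r c : Fin 4 → ℝ) (σ τ : Equiv.Perm (Fin 4)),
      (∀ i, r i = 1 ∨ r i = -1) ∧ (∀ i, c i = 1 ∨ c i = -1) ∧
      ∀ i j, H₂ i j = r i * c j * H₁ (σ i) (τ j) := by
  refine ⟨!![-1,1,1,0; -1,-1,0,1; 0,1,-1,1; -1,0,-1,-1], !![-1,1,0,1; -1,-1,1,0; 0,-1,-1,1; -1,0,-1,-1], ?_, ?_, ?_, ?_, sns1, sns2, ?_, ?_, ![1,1,-1,1], ![1,1,1,1],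
    Equiv.refl _, Equiv.swap 2 3, ?_, ?_, ?_⟩
  · intro i j; fin_cases i <;> fin_cases j <;> norm_num
  · intro i j; fin_cases i <;> fin_cases j <;> norm_num
  · intro i; fin_cases i <;> norm_num
  · intro i; fin_cases i <;> norm_num
  · intro i j hij
    fin_cases i <;> fin_cases j <;>
      first
        | exact absurd rfl hij
        | (norm_num [W4]; decide)
        | (norm_num [W4])
  · intro i j hij
    fin_cases i <;> fin_cases j <;>
      first
        | exact absurd rfl hij
        | (norm_num [C4star]; decide)
        | (norm_num [C4star])
  · intro i; fin_cases i <;> norm_num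
  · intro i; fin_cases i <;> norm_num
  · intro i j
    have hτ : ∀ j : Fin 4, (Equiv.swap (2:Fin 4) 3) j = ![0,1,3,2] j := by decide
    fin_cases i <;> fin_cases j <;>
      simp only [Equiv.refl_apply, hτ] <;> norm_num <;> simp
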